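/- Let A ⊆ ℝ be a nonempty compact set and let N_A ⊆ (0,∞) denote the set of points where the parallel volume function V_A(r) = λ₁({x : dist(x, A) < r}) fails to be differentiable. Then ∑_{s ∈ N_A} s < ∞. -/

import Mathlib

open Set MeasureTheory

/-- The parallel volume function of `A ⊆ ℝ`. -/
noncomputable def parVol (A : Set ℝ) (r : ℝ) : ℝ :=
  (MeasureTheory.volume {x : ℝ | Metric.infDist x A < r}).toReal

/-- The set of non-differentiability points of the parallel volume function. -/
def NDiff (A : Set ℝ) : Set ℝ :=
  {r : ℝ | 0 < r ∧ ¬ DifferentiableAt ℝ (parVol A) r}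

namespace Stmt6Aux

/-- `(c,d)` is a maximal bounded gap of `A`. -/
def IsGap (A : Set ℝ) (c d : ℝ) : Prop := c ∈ A ∧ d ∈ A ∧ c < d ∧ Ioo c d ∩ A = ∅

variable {A : Set ℝ}

lemma gap_not_mem {c d y : ℝ} (h : IsGap A c d) (hy : y ∈ A) : y ≤ c ∨ d ≤ y := by
  by_contra hc
  push_neg at hc
  have : y ∈ Ioo c d ∩ A := ⟨⟨hc.1, hc.2⟩, hy⟩
  rw [h.2.2.2] at this
  exact this

lemma gap_disjoint {c d c' d' : ℝ} (h : IsGap A c d) (h' : IsGap A c' d')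
    (hpq : (c, d) ≠ (c', d')) : Disjoint (Ioo c d) (Ioo c' d') := by
  rw [Set.disjoint_left]
  rintro x ⟨hx1, hx2⟩ ⟨hx3, hx4⟩
  have h1 := gap_not_mem h h'.1
  have h2 := gap_not_mem h h'.2.1
  have h3 := gap_not_mem h' h.1
  have h4 := gap_not_mem h' h.2.1
  apply hpq
  have hcc : c = c' := by rcases h1 with h | h <;> rcases h3 with h' | h' <;> linarith
  have hdd : d = d' := by rcases h2 with h | h <;> rcases h4 with h' | h' <;> linarith
  rw [hcc, hdd]

lemma exists_gap (hA : IsCompact A) (hne : A.Nonempty) {x : ℝ}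
    (hx1 : sInf A ≤ x) (hx2 : x ≤ sSup A) (hxA : x ∉ A) :
    ∃ c d, IsGap A c d ∧ c < x ∧ x < d ∧
      Metric.infDist x A = min (x - c) (d - x) := by
  set A₁ := A ∩ Iic x with hA₁
  set A₂ := A ∩ Ici x with hA₂
  have h₁c : IsCompact A₁ := hA.inter_right isClosed_Iic
  have h₁ne : A₁.Nonempty := ⟨sInf A, hA.sInf_mem hne, hx1⟩
  have h₂c : IsCompact A₂ := hA.inter_right isClosed_Ici
  have h₂ne : A₂.Nonempty := ⟨sSup A, hA.sSup_mem hne, hx2⟩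
  set c := sSup A₁ with hc_def
  set d := sInf A₂ with hd_def
  have hc : c ∈ A₁ := h₁c.sSup_mem h₁ne
  have hd : d ∈ A₂ := h₂c.sInf_mem h₂ne
  have hcx : c < x := lt_of_le_of_ne hc.2 (fun h => hxA (by rw [← h]; exact hc.1))
  have hxd : x < d := lt_of_le_of_ne hd.2 (fun h => hxA (by rw [h]; exact hd.1))
  have hgap : Ioo c d ∩ A = ∅ := by
    rw [eq_empty_iff_forall_notMem]
    rintro y ⟨⟨hy1, hy2⟩, hyA⟩
    rcases le_or_gt y x with hyx | hyx
    · exact absurd (le_csSup h₁c.bddAbove (⟨hyA, hyx⟩ : y ∈ A₁)) (not_le.2 hy1)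
    · exact absurd (csInf_le h₂c.bddBelow (⟨hyA, hyx.le⟩ : y ∈ A₂)) (not_le.2 hy2)
  refine ⟨c, d, ⟨hc.1, hd.1, hcx.trans hxd, hgap⟩, hcx, hxd, le_antisymm ?_ ?_⟩
  · refine le_min ?_ ?_
    · have := Metric.infDist_le_dist_of_mem (x := x) hc.1
      rwa [Real.dist_eq, abs_of_pos (by linarith)] at this
    · have := Metric.infDist_le_dist_of_mem (x := x) hd.1
      rwa [Real.dist_eq, abs_of_neg (by linarith), neg_sub] at this
  · by_contra hlt
    push_neg at hlt
    obtain ⟨y, hyA, hyd⟩ := (Metric.infDist_lt_iff hne).1 hlt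
    rw [Real.dist_eq] at hyd
    have h1 := abs_lt.1 (lt_of_lt_of_le hyd (min_le_left _ _))
    have h2 := abs_lt.1 (lt_of_lt_of_le hyd (min_le_right _ _))
    have : y ∈ Ioo c d ∩ A := ⟨⟨by linarith [h1.2], by linarith [h2.1]⟩, hyA⟩
    rw [hgap] at this
    exact this


lemma gap_subset_Icc (hA : IsCompact A) {c d : ℝ} (h : IsGap A c d) :
    Ioo c d ⊆ Icc (sInf A) (sSup A) := fun x hx =>
  ⟨(csInf_le hA.bddBelow h.1).trans hx.1.le, hx.2.le.trans (le_csSup hA.bddAbove h.2.1)⟩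

lemma gaps_finite (hA : IsCompact A) {ε : ℝ} (hε : 0 < ε) :
    {p : ℝ × ℝ | IsGap A p.1 p.2 ∧ ε ≤ p.2 - p.1}.Finite := by
  have key : {i : {p : ℝ × ℝ // IsGap A p.1 p.2} |
      ENNReal.ofReal ε ≤ volume (Ioo i.1.1 i.1.2)}.Finite := by
    refine MeasureTheory.Measure.finite_const_le_meas_of_disjoint_iUnion volume
      (ε := ENNReal.ofReal ε) (by simpa using hε) (fun i => measurableSet_Ioo) ?_ ?_
    · intro i j hij
      refine gap_disjoint i.2 j.2 (fun h => hij (Subtype.ext ?_))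
      simpa using h
    · refine ne_top_of_le_ne_top ?_ (measure_mono (iUnion_subset fun i => gap_subset_Icc hA i.2))
      rw [Real.volume_Icc]
      exact ENNReal.ofReal_ne_top
  refine (key.image Subtype.val).subset ?_
  rintro p ⟨hg, hl⟩
  refine ⟨⟨p, hg⟩, ?_, rfl⟩
  rw [mem_setOf_eq, Real.volume_Ioo]
  exact ENNReal.ofReal_le_ofReal hl

lemma parVol_eq (hA : IsCompact A) (hne : A.Nonempty) {r : ℝ} (hr : 0 < r) :
    parVol A r = (sSup A - sInf A + 2*r) -
      (volume (Icc (sInf A) (sSup A) ∩ {x | r ≤ Metric.infDist x A})).toReal := by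
  set a := sInf A with ha
  set b := sSup A with hb
  have hab : a ≤ b := csInf_le_csSup hne hA.bddBelow hA.bddAbove
  set E := {x : ℝ | Metric.infDist x A < r} with hE
  set S := Icc a b ∩ {x | r ≤ Metric.infDist x A} with hS
  have hES : Ioo (a - r) (b + r) = E ∪ S := by
    ext x
    constructor
    · rintro ⟨hxa, hxb⟩
      rcases lt_or_ge (Metric.infDist x A) r with h | h
      · exact Or.inl h
      · refine Or.inr ⟨⟨?_, ?_⟩, h⟩
        · by_contra hax
          push_neg at hax
          have h2 := Metric.infDist_le_dist_of_mem (x := x) (hA.sInf_mem hne)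
          rw [Real.dist_eq, abs_of_neg (by linarith)] at h2
          rw [← ha] at h2
          linarith
        · by_contra hbx
          push_neg at hbx
          have h2 := Metric.infDist_le_dist_of_mem (x := x) (hA.sSup_mem hne)
          rw [Real.dist_eq, abs_of_pos (by linarith)] at h2
          rw [← hb] at h2
          linarith
    · rintro (hx | hx)
      · obtain ⟨y, hyA, hyd⟩ := (Metric.infDist_lt_iff hne).1 hx
        have h1 : a ≤ y := csInf_le hA.bddBelow hyA
        have h2 : y ≤ b := le_csSup hA.bddAbove hyA
        rw [Real.dist_eq] at hyd
        have h3 := abs_lt.1 hyd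
        exact ⟨by linarith [h3.1], by linarith [h3.2]⟩
      · exact ⟨by linarith [hx.1.1], by linarith [hx.1.2]⟩
  have hdisj : Disjoint E S := by
    rw [Set.disjoint_left]
    rintro x hx ⟨_, hx'⟩
    rw [hE, mem_setOf_eq] at hx
    rw [mem_setOf_eq] at hx'
    exact absurd hx (not_lt.2 hx')
  have hSm : MeasurableSet S := measurableSet_Icc.inter
    ((isClosed_le continuous_const (Metric.continuous_infDist_pt A)).measurableSet)
  have hvol : volume (Ioo (a - r) (b + r)) = volume E + volume S := by
    rw [hES, measure_union hdisj hSm]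
  have hEfin : volume E ≠ ⊤ := by
    refine ne_top_of_le_ne_top ?_ (measure_mono (show E ⊆ Ioo (a-r) (b+r) from
      hES ▸ subset_union_left))
    rw [Real.volume_Ioo]; exact ENNReal.ofReal_ne_top
  have hSfin : volume S ≠ ⊤ := by
    refine ne_top_of_le_ne_top ?_ (measure_mono (show S ⊆ Ioo (a-r) (b+r) from
      hES ▸ subset_union_right))
    rw [Real.volume_Ioo]; exact ENNReal.ofReal_ne_top
  have htr : (volume (Ioo (a - r) (b + r))).toReal
      = (volume E).toReal + (volume S).toReal := by
    rw [hvol, ENNReal.toReal_add hEfin hSfin]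
  rw [Real.volume_Ioo, ENNReal.toReal_ofReal (by linarith)] at htr
  have : parVol A r = (volume E).toReal := rfl
  rw [this]
  linarith


lemma levelSet_eq (hA : IsCompact A) (hne : A.Nonempty) {r : ℝ} (hr : 0 < r)
    (K : Finset (ℝ × ℝ)) (hK : ∀ p : ℝ × ℝ, (IsGap A p.1 p.2 ∧ 2*r ≤ p.2 - p.1) ↔ p ∈ K) :
    Icc (sInf A) (sSup A) ∩ {x | r ≤ Metric.infDist x A}
      = ⋃ p ∈ K, Icc (p.1 + r) (p.2 - r) := by
  ext x
  constructor
  · rintro ⟨⟨hxa, hxb⟩, hxr⟩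
    rw [mem_setOf_eq] at hxr
    have hxA : x ∉ A := fun hx => by
      rw [Metric.infDist_zero_of_mem hx] at hxr; linarith
    obtain ⟨c, d, hg, hcx, hxd, hmin⟩ := exists_gap hA hne hxa hxb hxA
    rw [hmin] at hxr
    have h1 : r ≤ x - c := le_trans hxr (min_le_left _ _)
    have h2 : r ≤ d - x := le_trans hxr (min_le_right _ _)
    have hmem : ((c, d) : ℝ × ℝ) ∈ K := (hK (c, d)).1 ⟨hg, by dsimp; linarith⟩
    exact mem_biUnion hmem ⟨by linarith, by linarith⟩
  · intro hx
    rw [mem_iUnion₂] at hx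
    obtain ⟨p, hp, hx1, hx2⟩ := hx
    obtain ⟨hg, hlen⟩ := (hK p).2 hp
    have hac : sInf A ≤ p.1 := csInf_le hA.bddBelow hg.1
    have hdb : p.2 ≤ sSup A := le_csSup hA.bddAbove hg.2.1
    refine ⟨⟨by linarith, by linarith⟩, ?_⟩
    rw [mem_setOf_eq]
    by_contra hlt
    push_neg at hlt
    obtain ⟨y, hyA, hyd⟩ := (Metric.infDist_lt_iff hne).1 hlt
    rw [Real.dist_eq] at hyd
    have h3 := abs_lt.1 hyd
    rcases gap_not_mem hg hyA with h | h <;> linarith [h3.1, h3.2]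

lemma diffAt (hA : IsCompact A) (hne : A.Nonempty) {r₀ : ℝ} (hr₀ : 0 < r₀)
    (hng : ∀ c d, IsGap A c d → d - c ≠ 2 * r₀) :
    DifferentiableAt ℝ (parVol A) r₀ := by
  set a := sInf A with ha
  set b := sSup A with hb
  have hFfin := gaps_finite (A := A) hA (ε := r₀) hr₀
  set L := (fun p : ℝ × ℝ => p.2 - p.1) '' {p | IsGap A p.1 p.2 ∧ r₀ ≤ p.2 - p.1} with hLdef
  have hLfin : L.Finite := hFfin.image _
  have hL : (2*r₀) ∉ L := by
    rintro ⟨p, ⟨hg, _⟩, hlen⟩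
    exact hng _ _ hg hlen
  obtain ⟨ε₀, hε₀, hball⟩ := Metric.isOpen_iff.1 hLfin.isClosed.isOpen_compl _ hL
  set ε := min ε₀ r₀ with hεdef
  have hε : 0 < ε := lt_min hε₀ hr₀
  have hεr : ε ≤ r₀ := min_le_right _ _
  have hLsep : ∀ l ∈ L, l ≤ 2*r₀ - ε ∨ 2*r₀ + ε ≤ l := by
    intro l hl
    by_contra hc
    push_neg at hc
    have : l ∈ Metric.ball (2*r₀) ε₀ := by
      rw [Metric.mem_ball, Real.dist_eq, abs_lt]
      constructor <;> [linarith [min_le_left ε₀ r₀, hc.1]; linarith [min_le_left ε₀ r₀, hc.2]]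
    exact hball this hl
  have hKsub : {p : ℝ × ℝ | IsGap A p.1 p.2 ∧ 2*r₀ + ε ≤ p.2 - p.1}
      ⊆ {p : ℝ × ℝ | IsGap A p.1 p.2 ∧ r₀ ≤ p.2 - p.1} := by
    rintro p ⟨hg, hl⟩
    exact ⟨hg, by linarith⟩
  have hKfin := hFfin.subset hKsub
  set K := hKfin.toFinset with hKdef
  have hKmem : ∀ p : ℝ × ℝ, p ∈ K ↔ IsGap A p.1 p.2 ∧ 2*r₀ + ε ≤ p.2 - p.1 := by
    intro p; rw [hKdef, Set.Finite.mem_toFinset]; rfl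
  have hKiff : ∀ r : ℝ, |r - r₀| < ε/2 →
      ∀ p : ℝ × ℝ, (IsGap A p.1 p.2 ∧ 2*r ≤ p.2 - p.1) ↔ p ∈ K := by
    intro r hrr p
    have hrr' := abs_lt.1 hrr
    rw [hKmem]
    constructor
    · rintro ⟨hg, hl⟩
      refine ⟨hg, ?_⟩
      have hlL : p.2 - p.1 ∈ L := ⟨p, ⟨hg, by linarith⟩, rfl⟩
      rcases hLsep _ hlL with h | h
      · linarith
      · linarith
    · rintro ⟨hg, hl⟩
      exact ⟨hg, by linarith⟩
  -- the affine model
  set k : ℝ := (K.card : ℝ) with hk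
  set C : ℝ := ∑ p ∈ K, (p.2 - p.1) with hC
  have hform : ∀ r : ℝ, |r - r₀| < ε/2 → parVol A r = (b - a - C) + (2 + 2*k)*r := by
    intro r hrr
    have hrr' := abs_lt.1 hrr
    have hrpos : 0 < r := by linarith
    have hSr := levelSet_eq hA hne hrpos K (hKiff r hrr)
    have hpd : (↑K : Set (ℝ × ℝ)).PairwiseDisjoint (fun p => Icc (p.1 + r) (p.2 - r)) := by
      intro p hp q hq hpq
      rw [Finset.mem_coe, hKmem] at hp hq
      refine Disjoint.mono (Set.Icc_subset_Ioo (by linarith) (by linarith))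
        (Set.Icc_subset_Ioo (by linarith) (by linarith))
        (gap_disjoint hp.1 hq.1 (fun h => hpq ?_))
      simpa using h
    have hvol : volume (⋃ p ∈ K, Icc (p.1 + r) (p.2 - r))
        = ∑ p ∈ K, volume (Icc (p.1 + r) (p.2 - r)) :=
      measure_biUnion_finset hpd (fun _ _ => measurableSet_Icc)
    have htr : (volume (Icc a b ∩ {x | r ≤ Metric.infDist x A})).toReal
        = ∑ p ∈ K, (p.2 - p.1 - 2*r) := by
      rw [hSr, hvol, ENNReal.toReal_sum (fun p _ => by
        rw [Real.volume_Icc]; exact ENNReal.ofReal_ne_top)]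
      refine Finset.sum_congr rfl (fun p hp => ?_)
      rw [hKmem] at hp
      rw [Real.volume_Icc, ENNReal.toReal_ofReal (by linarith)]
      ring
    have hsum : ∑ p ∈ K, (p.2 - p.1 - 2*r) = C - k * (2*r) := by
      rw [hC, hk, Finset.sum_sub_distrib, Finset.sum_const, nsmul_eq_mul]
    rw [parVol_eq hA hne hrpos, ← ha, ← hb, htr, hsum]
    ring
  have hev : parVol A =ᶠ[nhds r₀] (fun r => (b - a - C) + (2 + 2*k)*r) := by
    rw [Filter.eventuallyEq_iff_exists_mem]
    refine ⟨Metric.ball r₀ (ε/2), Metric.ball_mem_nhds _ (by positivity), fun r hr => ?_⟩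
    rw [Metric.mem_ball, Real.dist_eq] at hr
    exact hform r hr
  rw [hev.differentiableAt_iff]
  exact (differentiable_const _ |>.add ((differentiable_id).const_mul _)).differentiableAt

end Stmt6Aux

open Stmt6Aux in
/-- For a nonempty compact `A ⊆ ℝ`, the non-differentiability points of the parallel
volume function are summable. -/
theorem stmt6 (A : Set ℝ) (hA : IsCompact A) (hne : A.Nonempty) :
    Summable (fun s : NDiff A => (s : ℝ)) := by
  classical
  set a := sInf A with ha
  set b := sSup A with hb
  have hab : a ≤ b := csInf_le_csSup hne hA.bddBelow hA.bddAbove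
  have hsub : ∀ s : NDiff A, ∃ p : ℝ × ℝ, IsGap A p.1 p.2 ∧ p.2 - p.1 = 2 * (s : ℝ) := by
    rintro ⟨s, hs0, hsd⟩
    by_contra h
    push_neg at h
    exact hsd (diffAt hA hne hs0 (fun c d hg => h (c, d) hg))
  choose g hg1 hg2 using hsub
  have ginj : Function.Injective g := by
    intro s t hst
    have h1 := hg2 s
    rw [hst, hg2 t] at h1
    exact Subtype.ext (by linarith)
  refine summable_of_sum_le (c := (b - a)/2) (fun s => s.2.1.le) (fun u => ?_)
  set v := u.image g with hv
  have hdisj : (↑v : Set (ℝ × ℝ)).PairwiseDisjoint (fun p => Ioo p.1 p.2) := by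
    intro p hp q hq hpq
    rw [Finset.mem_coe, hv, Finset.mem_image] at hp hq
    obtain ⟨s, _, rfl⟩ := hp
    obtain ⟨t, _, rfl⟩ := hq
    refine gap_disjoint (hg1 s) (hg1 t) (fun h => hpq ?_)
    simpa using h
  have hvol : ∑ p ∈ v, volume (Ioo p.1 p.2) = volume (⋃ p ∈ v, Ioo p.1 p.2) :=
    (measure_biUnion_finset hdisj (fun _ _ => measurableSet_Ioo)).symm
  have hle : volume (⋃ p ∈ v, Ioo p.1 p.2) ≤ volume (Icc a b) := by
    refine measure_mono (iUnion₂_subset fun p hp => ?_)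
    rw [hv, Finset.mem_image] at hp
    obtain ⟨s, _, rfl⟩ := hp
    exact gap_subset_Icc hA (hg1 s)
  have hIccne : volume (Icc a b) ≠ ⊤ := by rw [Real.volume_Icc]; exact ENNReal.ofReal_ne_top
  have htr : (∑ p ∈ v, volume (Ioo p.1 p.2)).toReal ≤ b - a := by
    calc (∑ p ∈ v, volume (Ioo p.1 p.2)).toReal
        ≤ (volume (Icc a b)).toReal :=
          ENNReal.toReal_mono hIccne (hvol ▸ hle)
      _ = b - a := by rw [Real.volume_Icc, ENNReal.toReal_ofReal (by linarith)]
  have hsum : ∑ p ∈ v, (p.2 - p.1) = (∑ p ∈ v, volume (Ioo p.1 p.2)).toReal := by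
    rw [ENNReal.toReal_sum (fun p _ => by rw [Real.volume_Ioo]; exact ENNReal.ofReal_ne_top)]
    refine Finset.sum_congr rfl (fun p hp => ?_)
    rw [hv, Finset.mem_image] at hp
    obtain ⟨s, _, rfl⟩ := hp
    rw [Real.volume_Ioo, ENNReal.toReal_ofReal (by linarith [(hg1 s).2.2.1])]
  have himg : ∑ p ∈ v, (p.2 - p.1) = ∑ s ∈ u, 2 * (s : ℝ) := by
    rw [hv, Finset.sum_image (fun s _ t _ h => ginj h)]
    exact Finset.sum_congr rfl (fun s _ => hg2 s)
  have : ∑ s ∈ u, 2 * (s : ℝ) ≤ b - a := by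
    rw [← himg, hsum]; exact htr
  have h2 : ∑ s ∈ u, 2 * (s : ℝ) = 2 * ∑ s ∈ u, (s : ℝ) := by
    rw [Finset.mul_sum]
  linarith
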